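/- Existence and uniqueness of the endemic equilibrium (Proposition 4, first part): Assume A is irreducible and s(BA − Γ) > 0. Then there exists a unique vector x̄ ∈ ℝⁿ with 0 < x̄_i ≤ 1/c_i for every i ∈ {1,…,n} such that β_i (1 − c_i x̄_i)(1 − x̄_i) ∑_{j=1}^n A_{ij} x̄_j = γ_i x̄_i for every i ∈ {1,…,n}. -/

import Mathlib

open Matrix Filter Topology

/-- Spectral abscissa: the maximum of the real parts of the complex eigenvalues. -/
noncomputable def specAbs {n : ℕ} (M : Matrix (Fin n) (Fin n) ℝ) : ℝ :=
  sSup (Complex.re '' spectrum ℂ (M.map (Complex.ofReal ·)))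

/-- Irreducibility of a matrix. -/
def MatIrreducible {n : ℕ} (A : Matrix (Fin n) (Fin n) ℝ) : Prop :=
  ∀ S : Set (Fin n), S.Nonempty → S ≠ Set.univ → ∃ i ∈ S, ∃ j ∉ S, 0 < A i j

/-- The controlled SIS vector field. -/
def sisF {n : ℕ} (A : Matrix (Fin n) (Fin n) ℝ) (β γ c : Fin n → ℝ)
    (x : Fin n → ℝ) (i : Fin n) : ℝ :=
  β i * (1 - c i * x i) * (1 - x i) * (∑ j, A i j * x j) - γ i * x i

/-- A solution of the controlled SIS system. -/
def IsSol {n : ℕ} (A : Matrix (Fin n) (Fin n) ℝ) (β γ c : Fin n → ℝ)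
    (x : ℝ → Fin n → ℝ) : Prop :=
  ∀ t : ℝ, 0 ≤ t → HasDerivWithinAt x (sisF A β γ c (x t)) (Set.Ici 0) t


/-- Strict antitonicity of the one-dimensional SIS map on `[0, 1/c]`. -/
lemma sis_f_strictAnti (βi γi ci y s t : ℝ) (hβ : 0 < βi) (hγ : 0 ≤ γi) (hc : 1 < ci)
    (hy : 0 < y) (hs : 0 ≤ s) (hst : s < t) (ht : t ≤ 1 / ci) :
    βi * (1 - ci * t) * (1 - t) * y - γi * t < βi * (1 - ci * s) * (1 - s) * y - γi * s := by
  have hc0 : 0 < ci := lt_trans one_pos hc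
  have ht' : t * ci ≤ 1 := (le_div_iff₀ hc0).mp ht
  have hg : (1 - ci * t) * (1 - t) < (1 - ci * s) * (1 - s) := by
    nlinarith [mul_pos (sub_pos.2 hst) (sub_pos.2 hst)]
  nlinarith [mul_pos hβ hy, mul_le_mul_of_nonneg_left (le_of_lt hst) hγ]

/-- Existence and uniqueness of the root in `(0, 1/c]`. -/
lemma sis_root (βi γi ci y : ℝ) (hβ : 0 < βi) (hγ : 0 ≤ γi) (hc : 1 < ci) (hy : 0 < y) :
    ∃! t : ℝ, (0 < t ∧ t ≤ 1 / ci) ∧ βi * (1 - ci * t) * (1 - t) * y = γi * t := by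
  have hc0 : 0 < ci := lt_trans one_pos hc
  set f : ℝ → ℝ := fun t => βi * (1 - ci * t) * (1 - t) * y - γi * t with hf
  have hcont : ContinuousOn f (Set.Icc 0 (1 / ci)) := by fun_prop
  have h0 : 0 ≤ 1 / ci := by positivity
  have hfa : f 0 = βi * y := by rw [hf]; dsimp only; ring
  have h1 : ci * (1 / ci) = 1 := mul_one_div_cancel (ne_of_gt hc0)
  have hfb : f (1 / ci) = -(γi * (1 / ci)) := by
    rw [hf]; dsimp only; rw [h1]; ring
  have hiv : (0 : ℝ) ∈ Set.Icc (f (1 / ci)) (f 0) := by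
    constructor
    · rw [hfb]; simp; positivity
    · rw [hfa]; positivity
  obtain ⟨t, htmem, htr⟩ := intermediate_value_Icc' h0 hcont hiv
  have htpos : 0 < t := by
    rcases lt_or_eq_of_le htmem.1 with h | h
    · exact h
    · exfalso
      rw [← h] at htr
      rw [hfa] at htr
      nlinarith
  have htr' : βi * (1 - ci * t) * (1 - t) * y - γi * t = 0 := htr
  refine ⟨t, ⟨⟨htpos, htmem.2⟩, by linarith⟩, ?_⟩
  rintro t' ⟨⟨ht'pos, ht'le⟩, ht'eq⟩
  rcases lt_trichotomy t' t with h | h | h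
  · exfalso
    have := sis_f_strictAnti βi γi ci y t' t hβ hγ hc hy (le_of_lt ht'pos) h htmem.2
    linarith
  · exact h
  · exfalso
    have := sis_f_strictAnti βi γi ci y t t' hβ hγ hc hy (le_of_lt htpos) h ht'le
    linarith

/-- If `s` is a strict subsolution then `s` is below the root. -/
lemma lt_root_of_sub (βi γi ci y s t : ℝ) (hβ : 0 < βi) (hγ : 0 ≤ γi) (hc : 1 < ci)
    (hy : 0 < y) (hs0 : 0 ≤ s) (hsle : s ≤ 1 / ci)
    (hsub : γi * s < βi * (1 - ci * s) * (1 - s) * y)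
    (ht : 0 < t ∧ t ≤ 1 / ci) (heq : βi * (1 - ci * t) * (1 - t) * y = γi * t) :
    s < t := by
  rcases lt_trichotomy s t with h | h | h
  · exact h
  · exfalso; rw [← h] at heq; linarith
  · exfalso
    have := sis_f_strictAnti βi γi ci y t s hβ hγ hc hy (le_of_lt ht.1) h hsle
    linarith

/-- Monotonicity of the root in `y`. -/
lemma root_mono (βi γi ci y y' t t' : ℝ) (hβ : 0 < βi) (hγ : 0 ≤ γi) (hc : 1 < ci)
    (hy : 0 < y) (hyy : y ≤ y')
    (ht : 0 < t ∧ t ≤ 1 / ci) (heq : βi * (1 - ci * t) * (1 - t) * y = γi * t)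
    (ht' : 0 < t' ∧ t' ≤ 1 / ci) (heq' : βi * (1 - ci * t') * (1 - t') * y' = γi * t') :
    t ≤ t' := by
  have hc0 : 0 < ci := lt_trans one_pos hc
  have hy' : 0 < y' := lt_of_lt_of_le hy hyy
  have hgt : 0 ≤ (1 - ci * t) * (1 - t) := by
    have h1 : t * ci ≤ 1 := (le_div_iff₀ hc0).mp ht.2
    have h2 : t < 1 := lt_of_le_of_lt ht.2 (by rw [div_lt_one hc0]; exact hc)
    nlinarith
  by_contra hlt
  push_neg at hlt
  have hkey := sis_f_strictAnti βi γi ci y' t' t hβ hγ hc hy' (le_of_lt ht'.1) hlt ht.2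
  -- f_{y'}(t) ≥ 0
  have h1 : βi * (1 - ci * t) * (1 - t) * y ≤ βi * (1 - ci * t) * (1 - t) * y' := by
    have : 0 ≤ βi * ((1 - ci * t) * (1 - t)) := by positivity
    nlinarith
  linarith

lemma exists_eigen_pos {n : ℕ} (M : Matrix (Fin n) (Fin n) ℝ) (hs : 0 < specAbs M) :
    ∃ (μ : ℂ) (w : Fin n → ℂ), w ≠ 0 ∧
      (M.map (Complex.ofReal ·)).mulVec w = μ • w ∧ 0 < μ.re := by
  set Mc := M.map (Complex.ofReal ·) with hMc
  have hfin : (Complex.re '' spectrum ℂ Mc).Finite := (Matrix.finite_spectrum Mc).image _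
  have hne : (Complex.re '' spectrum ℂ Mc).Nonempty := by
    by_contra h
    rw [Set.not_nonempty_iff_eq_empty] at h
    rw [specAbs] at hs
    rw [show M.map (fun x => (Complex.ofReal x)) = Mc from rfl, h] at hs
    simp [Real.sSup_empty] at hs
  have hmem : sSup (Complex.re '' spectrum ℂ Mc) ∈ Complex.re '' spectrum ℂ Mc :=
    hne.csSup_mem hfin
  obtain ⟨μ, hμmem, hμre⟩ := hmem
  have hμpos : 0 < μ.re := by rw [hμre]; exact hs
  rw [spectrum.mem_iff] at hμmem
  have hdet : (algebraMap ℂ (Matrix (Fin n) (Fin n) ℂ) μ - Mc).det = 0 := by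
    by_contra h
    exact hμmem ((Matrix.isUnit_iff_isUnit_det _).mpr (isUnit_iff_ne_zero.mpr h))
  obtain ⟨w, hw0, hww⟩ := (Matrix.exists_mulVec_eq_zero_iff).mpr hdet
  refine ⟨μ, w, hw0, ?_, hμpos⟩
  have : (algebraMap ℂ (Matrix (Fin n) (Fin n) ℂ) μ).mulVec w - Mc.mulVec w = 0 := by
    rw [← Matrix.sub_mulVec]; exact hww
  have h2 : (algebraMap ℂ (Matrix (Fin n) (Fin n) ℂ) μ).mulVec w = μ • w := by
    rw [Algebra.algebraMap_eq_smul_one, Matrix.smul_mulVec, Matrix.one_mulVec]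
  rw [h2] at this
  have := sub_eq_zero.mp this
  linear_combination -this

lemma mulVec_entry {n : ℕ} (P : Matrix (Fin n) (Fin n) ℝ) (v : Fin n → ℝ) (i : Fin n) :
    P.mulVec v i = ∑ j, P i j * v j := by
  simp [Matrix.mulVec, dotProduct]

lemma single_le_mulVec {n : ℕ} (P : Matrix (Fin n) (Fin n) ℝ) (hP : ∀ i j, 0 ≤ P i j)
    (v : Fin n → ℝ) (hv : ∀ i, 0 ≤ v i) (i j : Fin n) :
    P i j * v j ≤ P.mulVec v i := by
  rw [mulVec_entry]
  exact Finset.single_le_sum (f := fun j => P i j * v j)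
    (fun k _ => mul_nonneg (hP i k) (hv k)) (Finset.mem_univ j)

lemma mulVec_nonneg' {n : ℕ} (P : Matrix (Fin n) (Fin n) ℝ) (hP : ∀ i j, 0 ≤ P i j)
    (v : Fin n → ℝ) (hv : ∀ i, 0 ≤ v i) (i : Fin n) : 0 ≤ P.mulVec v i := by
  rw [mulVec_entry]
  exact Finset.sum_nonneg fun j _ => mul_nonneg (hP i j) (hv j)

lemma mulVec_mono' {n : ℕ} (P : Matrix (Fin n) (Fin n) ℝ) (hP : ∀ i j, 0 ≤ P i j)
    (a b : Fin n → ℝ) (hab : ∀ i, a i ≤ b i) (i : Fin n) :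
    P.mulVec a i ≤ P.mulVec b i := by
  rw [mulVec_entry, mulVec_entry]
  exact Finset.sum_le_sum fun j _ => mul_le_mul_of_nonneg_left (hab j) (hP i j)

lemma iterate_mulVec_pos {n : ℕ} (hn : 2 ≤ n) (P : Matrix (Fin n) (Fin n) ℝ)
    (hP : ∀ i j, 0 ≤ P i j) (hd : ∀ i, 0 < P i i)
    (hconn : ∀ S : Set (Fin n), S.Nonempty → S ≠ Set.univ → ∃ i ∉ S, ∃ j ∈ S, 0 < P i j)
    (u : Fin n → ℝ) (hu : ∀ i, 0 ≤ u i) (hune : ∃ i, 0 < u i) :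
    ∀ i, 0 < ((fun v => P.mulVec v)^[n-1] u) i := by
  classical
  set uk : ℕ → Fin n → ℝ := fun k => (fun v => P.mulVec v)^[k] u with huk
  have hstep : ∀ k, uk (k+1) = P.mulVec (uk k) := by
    intro k
    rw [huk]
    simp [Function.iterate_succ_apply']
  have hnn : ∀ k i, 0 ≤ uk k i := by
    intro k
    induction k with
    | zero => exact hu
    | succ k ih => rw [hstep]; exact mulVec_nonneg' P hP _ ih
  set Sk : ℕ → Finset (Fin n) := fun k => Finset.univ.filter (fun i => 0 < uk k i) with hSk
  have hmemS : ∀ k i, i ∈ Sk k ↔ 0 < uk k i := by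
    intro k i; rw [hSk]; simp
  have hsucc : ∀ k i, i ∈ Sk k → i ∈ Sk (k+1) := by
    intro k i hi
    rw [hmemS] at hi ⊢
    rw [hstep]
    calc (0:ℝ) < P i i * uk k i := mul_pos (hd i) hi
    _ ≤ P.mulVec (uk k) i := single_le_mulVec P hP _ (hnn k) i i
  have hgrow : ∀ k, (Sk k).Nonempty → Sk k ≠ Finset.univ →
      ∃ i, i ∉ Sk k ∧ i ∈ Sk (k+1) := by
    intro k hne hnu
    obtain ⟨i, hiS, j, hjS, hPij⟩ := hconn {i | 0 < uk k i}
      (by obtain ⟨a, ha⟩ := hne; exact ⟨a, (hmemS k a).mp ha⟩)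
      (by
        intro h
        apply hnu
        apply Finset.eq_univ_of_forall
        intro x
        rw [hmemS]
        have : x ∈ ({i | 0 < uk k i} : Set (Fin n)) := h ▸ Set.mem_univ x
        exact this)
    refine ⟨i, fun h => hiS ((hmemS k i).mp h), ?_⟩
    rw [hmemS, hstep]
    calc (0:ℝ) < P i j * uk k j := mul_pos hPij hjS
    _ ≤ P.mulVec (uk k) i := single_le_mulVec P hP _ (hnn k) i j
  have hcard : ∀ k, min (k+1) n ≤ (Sk k).card := by
    intro k
    induction k with
    | zero =>
      obtain ⟨i, hi⟩ := hune
      have : i ∈ Sk 0 := (hmemS 0 i).mpr hi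
      have := Finset.card_pos.mpr ⟨i, this⟩
      omega
    | succ k ih =>
      have hsub : Sk k ⊆ Sk (k+1) := fun i hi => hsucc k i hi
      by_cases hU : Sk k = Finset.univ
      · have : Sk (k+1) = Finset.univ :=
          Finset.eq_univ_of_forall fun x => hsub (hU ▸ Finset.mem_univ x)
        rw [this]
        simp only [Finset.card_univ, Fintype.card_fin]
        omega
      · have hne : (Sk k).Nonempty := by
          rw [← Finset.card_pos]
          have : 1 ≤ min (k+1) n := by omega
          omega
        obtain ⟨i, hiN, hiI⟩ := hgrow k hne hU
        have hss : Sk k ⊂ Sk (k+1) := ⟨hsub, fun h => hiN (h hiI)⟩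
        have := Finset.card_lt_card hss
        have hle : (Sk k).card ≤ n := le_trans (Finset.card_le_card (Finset.subset_univ _))
          (by simp)
        omega
  intro i
  have := hcard (n-1)
  have hmin : min (n-1+1) n = n := by omega
  rw [hmin] at this
  have hU : Sk (n-1) = Finset.univ := by
    apply Finset.eq_univ_of_card
    have : (Sk (n-1)).card ≤ n := le_trans (Finset.card_le_card (Finset.subset_univ _))
      (by simp)
    simp
    omega
  have : i ∈ Sk (n-1) := hU ▸ Finset.mem_univ i
  exact (hmemS _ i).mp this

lemma mulVec_constmul {n : ℕ} (P : Matrix (Fin n) (Fin n) ℝ) (r : ℝ) (v : Fin n → ℝ)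
    (i : Fin n) : P.mulVec (fun j => r * v j) i = r * P.mulVec v i := by
  simp only [mulVec_entry, Finset.mul_sum]
  exact Finset.sum_congr rfl fun j _ => by ring

lemma exists_subsol {n : ℕ} (hn : 2 ≤ n) (A : Matrix (Fin n) (Fin n) ℝ)
    (hA : ∀ i j, 0 ≤ A i j) (hirr : MatIrreducible A) (β γ : Fin n → ℝ)
    (hβ : ∀ i, 0 < β i) (hγ : ∀ i, 0 ≤ γ i)
    (hs : 0 < specAbs (Matrix.diagonal β * A - Matrix.diagonal γ)) :
    ∃ v : Fin n → ℝ, (∀ i, 0 < v i) ∧ ∀ i, γ i * v i < β i * ∑ j, A i j * v j := by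
  classical
  set M : Matrix (Fin n) (Fin n) ℝ := Matrix.diagonal β * A - Matrix.diagonal γ with hM
  have hMe : ∀ i j, M i j = β i * A i j - (if i = j then γ i else 0) := by
    intro i j
    rw [hM]
    simp [Matrix.sub_apply, Matrix.mul_apply, Matrix.diagonal_apply, ite_mul,
      Finset.sum_ite_eq, Matrix.diagonal]
  set d : ℝ := 1 + ∑ j, γ j with hd
  have hdγ : ∀ i, γ i < d := by
    intro i
    have : γ i ≤ ∑ j, γ j :=
      Finset.single_le_sum (fun j _ => hγ j) (Finset.mem_univ i)
    rw [hd]; linarith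
  set P : Matrix (Fin n) (Fin n) ℝ := Matrix.of fun i j =>
    β i * A i j + (if i = j then d - γ i else 0) with hP
  have hPe : ∀ i j, P i j = β i * A i j + (if i = j then d - γ i else 0) := fun i j => rfl
  have hPM : ∀ i j, P i j = M i j + (if i = j then d else 0) := by
    intro i j
    rw [hPe, hMe]
    by_cases h : i = j <;> simp [h] <;> ring
  have hPnn : ∀ i j, 0 ≤ P i j := by
    intro i j
    rw [hPe]
    have h1 : 0 ≤ β i * A i j := mul_nonneg (le_of_lt (hβ i)) (hA i j)
    by_cases h : i = j
    · rw [if_pos h]; have := hdγ i; nlinarith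
    · rw [if_neg h]; linarith
  have hPd : ∀ i, 0 < P i i := by
    intro i
    rw [hPe, if_pos rfl]
    have h1 : 0 ≤ β i * A i i := mul_nonneg (le_of_lt (hβ i)) (hA i i)
    have := hdγ i
    nlinarith
  have hPA : ∀ i j, 0 < A i j → 0 < P i j := by
    intro i j hij
    rw [hPe]
    have h1 : 0 < β i * A i j := mul_pos (hβ i) hij
    by_cases h : i = j
    · rw [if_pos h]; have := hdγ i; nlinarith
    · rw [if_neg h]; linarith
  have hconn : ∀ S : Set (Fin n), S.Nonempty → S ≠ Set.univ →
      ∃ i ∉ S, ∃ j ∈ S, 0 < P i j := by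
    intro S hSne hSnu
    have h1 : Sᶜ.Nonempty := Set.nonempty_compl.mpr hSnu
    have h2 : Sᶜ ≠ Set.univ := by
      obtain ⟨a, ha⟩ := hSne
      intro h
      have : a ∈ Sᶜ := h ▸ Set.mem_univ a
      exact this ha
    obtain ⟨i, hiS, j, hjS, hij⟩ := hirr Sᶜ h1 h2
    exact ⟨i, hiS, j, Set.notMem_compl_iff.mp hjS, hPA i j hij⟩
  obtain ⟨μ, w, hw0, hww, hμre⟩ := exists_eigen_pos M hs
  set u : Fin n → ℝ := fun i => ‖w i‖ with hu
  have hunn : ∀ i, 0 ≤ u i := fun i => norm_nonneg _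
  have hune : ∃ i, 0 < u i := by
    have : ∃ i, w i ≠ 0 := Function.ne_iff.mp hw0
    obtain ⟨i, hi⟩ := this
    exact ⟨i, norm_pos_iff.mpr hi⟩
  set r : ℝ := ‖μ + (d : ℂ)‖ with hr
  have hrd : d < r := by
    have h1 : (μ + (d : ℂ)).re ≤ r := Complex.re_le_norm _
    have h2 : (μ + (d : ℂ)).re = μ.re + d := by simp
    linarith
  have hPr : ∀ i, r * u i ≤ P.mulVec u i := by
    intro i
    have hMrow : ∑ j, (M i j : ℂ) * w j = μ * w i := by
      have := congrFun hww i
      simpa [Matrix.mulVec, dotProduct, Matrix.map_apply] using this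
    have hProw : ∑ j, (P i j : ℂ) * w j = (μ + (d : ℂ)) * w i := by
      have : ∀ j, (P i j : ℂ) * w j = (M i j : ℂ) * w j
          + (if i = j then (d : ℂ) else 0) * w j := by
        intro j
        rw [hPM]
        push_cast
        by_cases h : i = j <;> simp [h] <;> ring
      rw [Finset.sum_congr rfl fun j _ => this j, Finset.sum_add_distrib, hMrow]
      simp [ite_mul, Finset.sum_ite_eq]
      ring
    calc r * u i = ‖(μ + (d : ℂ)) * w i‖ := by
          rw [hr, hu]; rw [norm_mul]
      _ = ‖∑ j, (P i j : ℂ) * w j‖ := by rw [hProw]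
      _ ≤ ∑ j, ‖(P i j : ℂ) * w j‖ := norm_sum_le _ _
      _ = ∑ j, P i j * u j := by
          refine Finset.sum_congr rfl fun j _ => ?_
          rw [hu, norm_mul, Complex.norm_real, Real.norm_eq_abs, abs_of_nonneg (hPnn i j)]
      _ = P.mulVec u i := (mulVec_entry P u i).symm
  set v : Fin n → ℝ := (fun x => P.mulVec x)^[n-1] u with hv
  have hvpos : ∀ i, 0 < v i := iterate_mulVec_pos hn P hPnn hPd hconn u hunn hune
  -- growth along iterates
  have hgrow : ∀ k i, r * ((fun x => P.mulVec x)^[k] u i) ≤ (fun x => P.mulVec x)^[k+1] u i := by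
    intro k
    induction k with
    | zero => simpa using hPr
    | succ k ih =>
      intro i
      rw [Function.iterate_succ_apply', Function.iterate_succ_apply']
      calc r * P.mulVec ((fun x => P.mulVec x)^[k] u) i
          = P.mulVec (fun j => r * ((fun x => P.mulVec x)^[k] u j)) i :=
            (mulVec_constmul P r _ i).symm
        _ ≤ P.mulVec ((fun x => P.mulVec x)^[k+1] u) i := by
            apply mulVec_mono' P hPnn
            intro j
            simpa using ih j
  have hPv : ∀ i, r * v i ≤ P.mulVec v i := by
    intro i
    have := hgrow (n-1) i
    rw [Function.iterate_succ_apply'] at this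
    exact this
  refine ⟨v, hvpos, ?_⟩
  intro i
  have hPvi : P.mulVec v i = β i * (∑ j, A i j * v j) + (d - γ i) * v i := by
    rw [mulVec_entry]
    have : ∀ j, P i j * v j = β i * (A i j * v j)
        + (if i = j then (d - γ i) * v i else 0) := by
      intro j
      rw [hPe]
      by_cases h : i = j <;> simp [h] <;> ring
    rw [Finset.sum_congr rfl fun j _ => this j, Finset.sum_add_distrib,
      ← Finset.mul_sum, Finset.sum_ite_eq]
    simp
  have h1 : r * v i ≤ β i * (∑ j, A i j * v j) + (d - γ i) * v i := hPvi ▸ hPv i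
  have h2 : d * v i < r * v i := by
    exact mul_lt_mul_of_pos_right hrd (hvpos i)
  nlinarith

theorem stmt2 {n : ℕ} (hn : 2 ≤ n) (A : Matrix (Fin n) (Fin n) ℝ)
    (hA : ∀ i j, 0 ≤ A i j) (hirr : MatIrreducible A)
    (β γ c : Fin n → ℝ)
    (hβ : ∀ i, 0 < β i) (hγ : ∀ i, 0 ≤ γ i) (hc : ∀ i, 1 < c i)
    (hs : 0 < specAbs (Matrix.diagonal β * A - Matrix.diagonal γ)) :
    ∃! xbar : Fin n → ℝ, (∀ i, 0 < xbar i ∧ xbar i ≤ 1 / c i) ∧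
      ∀ i, β i * (1 - c i * xbar i) * (1 - xbar i) * (∑ j, A i j * xbar j)
        = γ i * xbar i := by
  classical
  haveI : Nonempty (Fin n) := ⟨⟨0, by omega⟩⟩
  have hc0 : ∀ i, (0:ℝ) < c i := fun i => lt_trans one_pos (hc i)
  -- every row has a positive entry
  have hrow : ∀ i, ∃ j, 0 < A i j := by
    intro i
    obtain ⟨k, hk⟩ := Fintype.exists_ne_of_one_lt_card (by simp; omega) i
    have h1 : ({i} : Set (Fin n)).Nonempty := ⟨i, rfl⟩
    have h2 : ({i} : Set (Fin n)) ≠ Set.univ := by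
      intro h
      have : k ∈ ({i} : Set (Fin n)) := h ▸ Set.mem_univ k
      exact hk this
    obtain ⟨a, ha, j, hj, hij⟩ := hirr {i} h1 h2
    rw [Set.mem_singleton_iff] at ha
    exact ⟨j, ha ▸ hij⟩
  have hApos : ∀ (x : Fin n → ℝ), (∀ k, 0 < x k) → ∀ i, 0 < ∑ j, A i j * x j := by
    intro x hx i
    obtain ⟨j, hj⟩ := hrow i
    calc (0:ℝ) < A i j * x j := mul_pos hj (hx j)
      _ ≤ ∑ j, A i j * x j := Finset.single_le_sum
          (fun k _ => mul_nonneg (hA i k) (le_of_lt (hx k))) (Finset.mem_univ j)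
  -- uniqueness part (pure algebra)
  have key : ∀ x y : Fin n → ℝ,
      ((∀ i, 0 < x i ∧ x i ≤ 1 / c i) ∧
        ∀ i, β i * (1 - c i * x i) * (1 - x i) * (∑ j, A i j * x j) = γ i * x i) →
      ((∀ i, 0 < y i ∧ y i ≤ 1 / c i) ∧
        ∀ i, β i * (1 - c i * y i) * (1 - y i) * (∑ j, A i j * y j) = γ i * y i) →
      x ≤ y := by
    intro x y ⟨hx1, hx2⟩ ⟨hy1, hy2⟩
    by_contra hxy
    rw [Pi.le_def] at hxy
    push_neg at hxy
    obtain ⟨j₀, hj₀⟩ := hxy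
    set θ : ℝ := Finset.univ.sup' Finset.univ_nonempty (fun k => x k / y k) with hθ
    obtain ⟨i, _, hieq⟩ := Finset.exists_mem_eq_sup' Finset.univ_nonempty (fun k => x k / y k)
    have hθub : ∀ k, x k ≤ θ * y k := by
      intro k
      have h1 : x k / y k ≤ θ := Finset.le_sup' (fun k => x k / y k) (Finset.mem_univ k)
      have := (div_le_iff₀ (hy1 k).1).mp h1
      linarith [this]
    have hθ1 : 1 < θ := by
      have h1 : x j₀ / y j₀ ≤ θ := Finset.le_sup' (fun k => x k / y k) (Finset.mem_univ j₀)
      have h2 : 1 < x j₀ / y j₀ := (one_lt_div (hy1 j₀).1).mpr hj₀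
      linarith
    have hxi : x i = θ * y i := by
      have h2 : x i / y i = θ := by rw [hθ]; exact hieq.symm
      rw [div_eq_iff (ne_of_gt (hy1 i).1)] at h2
      linarith [h2]
    have hyxi : y i < x i := by
      rw [hxi]
      nlinarith [(hy1 i).1]
    have hSx : 0 < ∑ j, A i j * x j := hApos x (fun k => (hx1 k).1) i
    have hSy : 0 < ∑ j, A i j * y j := hApos y (fun k => (hy1 k).1) i
    have hAx : ∑ j, A i j * x j ≤ θ * ∑ j, A i j * y j := by
      rw [Finset.mul_sum]
      refine Finset.sum_le_sum fun j _ => ?_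
      calc A i j * x j ≤ A i j * (θ * y j) :=
            mul_le_mul_of_nonneg_left (hθub j) (hA i j)
        _ = θ * (A i j * y j) := by ring
    have hxlt1 : x i < 1 := lt_of_le_of_lt (hx1 i).2 (by rw [div_lt_one (hc0 i)]; exact hc i)
    have hylt1 : y i < 1 := lt_of_le_of_lt (hy1 i).2 (by rw [div_lt_one (hc0 i)]; exact hc i)
    have hcx : c i * x i ≤ 1 := by
      have := (hx1 i).2
      rw [le_div_iff₀ (hc0 i)] at this
      linarith
    have hcy : c i * y i ≤ 1 := by
      have := (hy1 i).2
      rw [le_div_iff₀ (hc0 i)] at this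
      linarith
    have hK : (0:ℝ) ≤ β i * (1 - c i * x i) * (1 - x i) :=
      mul_nonneg (mul_nonneg (hβ i).le (by linarith)) (by linarith)
    have hKK : β i * (1 - c i * x i) * (1 - x i) < β i * (1 - c i * y i) * (1 - y i) := by
      have := sis_f_strictAnti (β i) 0 (c i) 1 (y i) (x i) (hβ i) (le_refl 0) (hc i)
        one_pos (le_of_lt (hy1 i).1) hyxi (hx1 i).2
      nlinarith
    rcases eq_or_lt_of_le (hγ i) with hγi | hγi
    · -- γ i = 0 case
      have hx0 : β i * (1 - c i * x i) * (1 - x i) * (∑ j, A i j * x j) = 0 := by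
        rw [hx2 i, ← hγi]; ring
      have hy0 : β i * (1 - c i * y i) * (1 - y i) * (∑ j, A i j * y j) = 0 := by
        rw [hy2 i, ← hγi]; ring
      have hKx : 1 - c i * x i = 0 := by
        rcases mul_eq_zero.mp hx0 with h | h
        · rcases mul_eq_zero.mp h with h' | h'
          · rcases mul_eq_zero.mp h' with h'' | h''
            · exact absurd h'' (ne_of_gt (hβ i))
            · exact h''
          · linarith
        · linarith
      have hKy : 1 - c i * y i = 0 := by
        rcases mul_eq_zero.mp hy0 with h | h
        · rcases mul_eq_zero.mp h with h' | h'
          · rcases mul_eq_zero.mp h' with h'' | h''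
            · exact absurd h'' (ne_of_gt (hβ i))
            · exact h''
          · linarith
        · linarith
      have : c i * y i < c i * x i := mul_lt_mul_of_pos_left hyxi (hc0 i)
      linarith
    · -- γ i > 0 case
      have e1 : γ i * x i ≤ β i * (1 - c i * x i) * (1 - x i) * (θ * ∑ j, A i j * y j) := by
        rw [← hx2 i]
        exact mul_le_mul_of_nonneg_left hAx hK
      have e2 : β i * (1 - c i * x i) * (1 - x i) * (θ * ∑ j, A i j * y j)
          < β i * (1 - c i * y i) * (1 - y i) * (θ * ∑ j, A i j * y j) := by
        have hpos : 0 < θ * ∑ j, A i j * y j := mul_pos (lt_trans one_pos hθ1) hSy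
        exact mul_lt_mul_of_pos_right hKK hpos
      have e3 : β i * (1 - c i * y i) * (1 - y i) * (θ * ∑ j, A i j * y j)
          = θ * (γ i * y i) := by
        rw [← hy2 i]; ring
      have e4 : θ * (γ i * y i) = γ i * x i := by rw [hxi]; ring
      linarith
  -- existence
  obtain ⟨v, hvpos, hvsub⟩ := exists_subsol hn A hA hirr β γ hβ hγ hs
  set S : Fin n → ℝ := fun i => ∑ j, A i j * v j with hS
  have hSpos : ∀ i, 0 < S i := hApos v hvpos
  set D : Fin n → ℝ := fun i => β i * S i - γ i * v i with hD
  have hDpos : ∀ i, 0 < D i := fun i => by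
    have := hvsub i; rw [hD]; dsimp only; linarith
  set ε : ℝ := Finset.univ.inf' Finset.univ_nonempty (fun i =>
    min (D i / (2 * (c i + 1) * v i * (β i * S i))) (1 / (2 * c i * v i))) with hε
  have hεpos : 0 < ε := by
    rw [hε, Finset.lt_inf'_iff]
    intro i _
    apply lt_min
    · apply div_pos (hDpos i)
      have := hc0 i; have := hvpos i; have := hSpos i; have := hβ i
      positivity
    · have := hc0 i; have := hvpos i
      positivity
  have hεle1 : ∀ i, ε * (2 * (c i + 1) * v i * (β i * S i)) ≤ D i := by
    intro i
    have h1 : ε ≤ D i / (2 * (c i + 1) * v i * (β i * S i)) :=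
      le_trans (Finset.inf'_le _ (Finset.mem_univ i)) (min_le_left _ _)
    have hden : 0 < 2 * (c i + 1) * v i * (β i * S i) := by
      have := hc0 i; have := hvpos i; have := hSpos i; have := hβ i
      positivity
    rw [le_div_iff₀ hden] at h1
    linarith
  have hεle2 : ∀ i, ε * (2 * c i * v i) ≤ 1 := by
    intro i
    have h1 : ε ≤ 1 / (2 * c i * v i) :=
      le_trans (Finset.inf'_le _ (Finset.mem_univ i)) (min_le_right _ _)
    have hden : 0 < 2 * c i * v i := by
      have := hc0 i; have := hvpos i; positivity
    rw [le_div_iff₀ hden] at h1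
    linarith
  set x0 : Fin n → ℝ := fun i => ε * v i with hx0
  have hx0pos : ∀ i, 0 < x0 i := fun i => mul_pos hεpos (hvpos i)
  have hx0le : ∀ i, x0 i ≤ 1 / c i := by
    intro i
    rw [hx0]
    dsimp only
    rw [le_div_iff₀ (hc0 i)]
    have := hεle2 i
    nlinarith [mul_pos hεpos (hvpos i)]
  have hx0sub : ∀ i, γ i * x0 i
      < β i * (1 - c i * x0 i) * (1 - x0 i) * (∑ j, A i j * x0 j) := by
    intro i
    have hsum : (∑ j, A i j * x0 j) = ε * S i := by
      rw [hS, hx0]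
      dsimp only
      rw [Finset.mul_sum]
      exact Finset.sum_congr rfl fun j _ => by ring
    rw [hsum, hx0]
    dsimp only
    have h1 := hεle1 i
    have h2 : 0 < β i * S i := mul_pos (hβ i) (hSpos i)
    have hD' : D i = β i * S i - γ i * v i := rfl
    have ha : (0:ℝ) ≤ c i * (ε * v i) := by
      have := hc0 i; have := hvpos i; positivity
    have hb' : (0:ℝ) ≤ ε * v i := (mul_pos hεpos (hvpos i)).le
    nlinarith [mul_pos hεpos (hDpos i), mul_nonneg (mul_nonneg h2.le ha) hb',
      mul_pos hεpos (hvpos i), hSpos i, hβ i, hc0 i]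
  set bb : Fin n → ℝ := fun i => 1 / c i with hbb
  have hx0b : x0 ≤ bb := fun i => hx0le i
  haveI hfact : Fact (x0 ≤ bb) := ⟨hx0b⟩
  have hsumpos : ∀ (x : Fin n → ℝ), x0 ≤ x → ∀ i, 0 < ∑ j, A i j * x j := by
    intro x hx i
    have h1 : (∑ j, A i j * x0 j) ≤ ∑ j, A i j * x j :=
      Finset.sum_le_sum fun j _ => mul_le_mul_of_nonneg_left (hx j) (hA i j)
    exact lt_of_lt_of_le (hApos x0 hx0pos i) h1
  set T : (Fin n → ℝ) → (Fin n → ℝ) := fun x i =>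
    if hy : 0 < ∑ j, A i j * x j then
      (sis_root (β i) (γ i) (c i) _ (hβ i) (hγ i) (hc i) hy).choose
    else x0 i with hT
  have hTspec : ∀ (x : Fin n → ℝ) (i : Fin n), (hy : 0 < ∑ j, A i j * x j) →
      (0 < T x i ∧ T x i ≤ 1 / c i) ∧
        β i * (1 - c i * T x i) * (1 - T x i) * (∑ j, A i j * x j) = γ i * T x i := by
    intro x i hy
    rw [hT]
    dsimp only
    rw [dif_pos hy]
    exact (sis_root (β i) (γ i) (c i) _ (hβ i) (hγ i) (hc i) hy).choose_spec.1
  have hTx0 : ∀ i, x0 i ≤ T x0 i := by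
    intro i
    have hy := hsumpos x0 le_rfl i
    have hspec := hTspec x0 i hy
    exact le_of_lt (lt_root_of_sub (β i) (γ i) (c i) _ (x0 i) (T x0 i) (hβ i) (hγ i)
      (hc i) hy (hx0pos i).le (hx0le i) (hx0sub i) hspec.1 hspec.2)
  have hTmono : ∀ x y : Fin n → ℝ, x0 ≤ x → x ≤ y → ∀ i, T x i ≤ T y i := by
    intro x y hx hxy i
    have hyx := hsumpos x hx i
    have hyy := hsumpos y (le_trans hx hxy) i
    have hsx := hTspec x i hyx
    have hsy := hTspec y i hyy
    have hle : (∑ j, A i j * x j) ≤ ∑ j, A i j * y j :=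
      Finset.sum_le_sum fun j _ => mul_le_mul_of_nonneg_left (hxy j) (hA i j)
    exact root_mono (β i) (γ i) (c i) _ _ (T x i) (T y i) (hβ i) (hγ i) (hc i)
      hyx hle hsx.1 hsx.2 hsy.1 hsy.2
  have hTmem : ∀ z : Fin n → ℝ, x0 ≤ z → z ≤ bb → x0 ≤ T z ∧ T z ≤ bb := by
    intro z hz1 hz2
    constructor
    · intro i
      exact le_trans (hTx0 i) (hTmono x0 z le_rfl hz1 i)
    · intro i
      exact (hTspec z i (hsumpos z hz1 i)).1.2
  set F : Set.Icc x0 bb → Set.Icc x0 bb := fun z =>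
    ⟨T z, (hTmem z z.2.1 z.2.2).1, (hTmem z z.2.1 z.2.2).2⟩ with hF
  have hFmono : Monotone F := by
    intro z w hzw
    rw [hF]
    show ∀ i, T z.1 i ≤ T w.1 i
    intro i
    exact hTmono z w z.2.1 hzw i
  set G : Set.Icc x0 bb →o Set.Icc x0 bb := ⟨F, hFmono⟩ with hG
  have hfix : F G.lfp = G.lfp := G.map_lfp
  set xb : Fin n → ℝ := (G.lfp : Set.Icc x0 bb).1 with hxb
  have hxbmem : x0 ≤ xb ∧ xb ≤ bb := ⟨(G.lfp : Set.Icc x0 bb).2.1, (G.lfp : Set.Icc x0 bb).2.2⟩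
  have hTfix : ∀ i, T xb i = xb i := by
    intro i
    have := congrArg Subtype.val hfix
    rw [hF] at this
    exact congrFun this i
  have hxbsum : ∀ i, 0 < ∑ j, A i j * xb j := hsumpos xb hxbmem.1
  have hxbprop : (∀ i, 0 < xb i ∧ xb i ≤ 1 / c i) ∧
      ∀ i, β i * (1 - c i * xb i) * (1 - xb i) * (∑ j, A i j * xb j) = γ i * xb i := by
    constructor
    · intro i
      have := (hTspec xb i (hxbsum i)).1
      rw [hTfix i] at this
      exact this
    · intro i
      have := (hTspec xb i (hxbsum i)).2
      rw [hTfix i] at this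
      exact this
  refine ⟨xb, hxbprop, ?_⟩
  intro y hy
  exact le_antisymm (key y xb hy hxbprop) (key xb y hxbprop hy)
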